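/- Let μ₀ be a commutative multiplication on A whose associator satisfies A_{μ₀}(x,y,z) = A_{μ₀}(z,y,x) for all x,y,z. For bilinear maps φ,φ' on A set D(φ,φ')(x,y,z) = φ(x,φ'(y,z)) − φ(φ'(x,y),z). Let (φ_i)_{i≥0} be an (Id−τ₁₃)-formal deformation of μ₀, i.e. φ₀ = μ₀ and for every k ≥ 0 and all x,y,z ∈ A: ∑_{i+j=k} [D(φ_i,φ_j)(x,y,z) − D(φ_i,φ_j)(z,y,x)] = 0. Then: (1) the skew-symmetric part ψ₁ of φ₁ satisfies the Jacobi identity; (2) the symmetric part ρ₁(x,y) = φ₁(x,y) + φ₁(y,x) satisfies μ₀(x,ρ₁(y,z)) − μ₀(z,ρ₁(x,y)) − ρ₁(μ₀(x,y),z) + ρ₁(x,μ₀(y,z)) = 0 for all x,y,z ∈ A. -/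

import Mathlib

open Finset

/-- The associator of a bilinear multiplication. -/
def assocMap {K A : Type*} [Field K] [AddCommGroup A] [Module K A]
    (μ : A →ₗ[K] A →ₗ[K] A) (x y z : A) : A :=
  μ x (μ y z) - μ (μ x y) z

/-- The skew-symmetric part of a bilinear multiplication. -/
def skewPart {K A : Type*} [Field K] [AddCommGroup A] [Module K A]
    (φ : A →ₗ[K] A →ₗ[K] A) (x y : A) : A :=
  φ x y - φ y x

/-- The symmetric part of a bilinear multiplication. -/
def symPart {K A : Type*} [Field K] [AddCommGroup A] [Module K A]
    (φ : A →ₗ[K] A →ₗ[K] A) (x y : A) : A :=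
  φ x y + φ y x

/-- `D(φ,φ')(x,y,z) = φ(x,φ'(y,z)) − φ(φ'(x,y),z)`. -/
def defD {K A : Type*} [Field K] [AddCommGroup A] [Module K A]
    (φ φ' : A →ₗ[K] A →ₗ[K] A) (x y z : A) : A :=
  φ x (φ' y z) - φ (φ' x y) z

/-- If `(φ_i)` is an `(Id − τ₁₃)`-formal deformation of a commutative `(Id − τ₁₃)`-
multiplication `μ₀`, then the skew-symmetric part `ψ₁` of `φ₁` satisfies the Jacobi
identity, and the symmetric part `ρ₁` of `φ₁` satisfies
`μ₀(x,ρ₁(y,z)) − μ₀(z,ρ₁(x,y)) − ρ₁(μ₀(x,y),z) + ρ₁(x,μ₀(y,z)) = 0`. -/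
theorem tau13_deformation {K A : Type*} [Field K] [CharZero K]
    [AddCommGroup A] [Module K A]
    (μ₀ : A →ₗ[K] A →ₗ[K] A)
    (hcomm : ∀ x y : A, μ₀ x y = μ₀ y x)
    (htau : ∀ x y z : A, assocMap μ₀ x y z = assocMap μ₀ z y x)
    (φ : ℕ → (A →ₗ[K] A →ₗ[K] A))
    (h0 : φ 0 = μ₀)
    (hdef : ∀ k : ℕ, ∀ x y z : A,
      ∑ p ∈ Finset.HasAntidiagonal.antidiagonal k,
        (defD (φ p.1) (φ p.2) x y z - defD (φ p.1) (φ p.2) z y x) = 0) :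
    (∀ x y z : A,
      skewPart (φ 1) x (skewPart (φ 1) y z) + skewPart (φ 1) y (skewPart (φ 1) z x) +
        skewPart (φ 1) z (skewPart (φ 1) x y) = 0) ∧
    (∀ x y z : A,
      μ₀ x (symPart (φ 1) y z) - μ₀ z (symPart (φ 1) x y) -
        symPart (φ 1) (μ₀ x y) z + symPart (φ 1) x (μ₀ y z) = 0) := by
  constructor
  · intro x y z
    have h2a := hdef 2 x y z
    have h2b := hdef 2 y z x
    have h2c := hdef 2 z x y
    rw [show (Finset.HasAntidiagonal.antidiagonal 2 : Finset (ℕ×ℕ)) = {(0,2),(1,1),(2,0)} by decide,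
      Finset.sum_insert (by decide), Finset.sum_pair (by decide)] at h2a h2b h2c
    simp only [defD, h0] at h2a h2b h2c
    rw [hcomm y x, hcomm z y] at h2a
    rw [hcomm z y, hcomm x z] at h2b
    rw [hcomm x z, hcomm y x] at h2c
    simp only [skewPart, map_add, map_sub, LinearMap.add_apply, LinearMap.sub_apply]
    linear_combination (norm := module) h2a + h2b + h2c
      + hcomm (φ 2 x y) z + hcomm (φ 2 y z) x + hcomm (φ 2 z x) y
      - hcomm (φ 2 y x) z - hcomm (φ 2 z y) x - hcomm (φ 2 x z) y
  · intro x y z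
    have h1 := hdef 1 x y z
    rw [show (Finset.HasAntidiagonal.antidiagonal 1 : Finset (ℕ×ℕ)) = {(0,1),(1,0)} by decide,
      Finset.sum_pair (by decide)] at h1
    simp only [defD, h0] at h1
    rw [hcomm y x, hcomm z y] at h1
    simp only [symPart, map_add, map_sub, LinearMap.add_apply, LinearMap.sub_apply]
    linear_combination (norm := module) h1 + hcomm (φ 1 x y) z - hcomm (φ 1 z y) x
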